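/- Let d ≥ 1 and let α and β be ℤ₂-cochains on the d-dimensional hypercube. Then δ(α ∪ β) = (δα) ∪ β + α ∪ (δβ), as an equality of ℤ₂-cochains (the two sides agree on every cell of the hypercube). -/

import Mathlib

/-- The three possible entries of a cell label of the hypercube:
`dot` = `•` (a spanned direction), `pls` = `+`, `mns` = `−`. -/
inductive Sgn : Type
  | dot : Sgn
  | pls : Sgn
  | mns : Sgn
  deriving DecidableEq

instance : Fintype Sgn :=
  ⟨{Sgn.dot, Sgn.pls, Sgn.mns}, fun x => by cases x <;> simp⟩

/-- A cell of the `d`-dimensional hypercube, labeled by a tuple in `{•,+,−}^d`. -/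
abbrev Cell (d : ℕ) := Fin d → Sgn

/-- A `ℤ₂`-cochain on the `d`-dimensional hypercube. -/
abbrev Cochain (d : ℕ) := Cell d → ZMod 2

/-- The top cell `(•,…,•)`. -/
def topCell (d : ℕ) : Cell d := fun _ => Sgn.dot

/-- The set of coordinates of a cell labeled `•`. -/
def dots {d : ℕ} (w : Cell d) : Finset (Fin d) :=
  Finset.univ.filter (fun j => w j = Sgn.dot)

/-- The coboundary of a `ℤ₂`-cochain: `(δα)(w)` is the sum of `α` over all cells obtained
from `w` by replacing exactly one entry equal to `•` by `+` or by `−`. -/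
def delta {d : ℕ} (α : Cochain d) : Cochain d := fun w =>
  ∑ j ∈ dots w, (α (Function.update w j Sgn.pls) + α (Function.update w j Sgn.mns))

/-- The set of coordinates where both `z` and `z'` are `•`. -/
def bothDot {d : ℕ} (z z' : Cell d) : Finset (Fin d) :=
  Finset.univ.filter (fun j => z j = Sgn.dot ∧ z' j = Sgn.dot)

/-- The allowed values of `(z_j, z'_j)` at a coordinate `j` not in the common-`•` set `I`:
`(+,•)` or `(•,−)` when `ℓ(j) = #{i ∈ I : i < j}` is even, and `(−,•)` or `(•,+)` when it
is odd. -/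
def pairCond {d : ℕ} (I : Finset (Fin d)) (j : Fin d) (a b : Sgn) : Prop :=
  if (I.filter (fun i => i < j)).card % 2 = 0 then
    (a = Sgn.pls ∧ b = Sgn.dot) ∨ (a = Sgn.dot ∧ b = Sgn.mns)
  else
    (a = Sgn.mns ∧ b = Sgn.dot) ∨ (a = Sgn.dot ∧ b = Sgn.pls)

/-- The pairs `(z,z')` appearing in the `m`-th higher cup product evaluated on the cell `w`:
the entries of `w` equal to `+` or `−` are fixed in both arguments, there are exactly `m`
coordinates where both `z` and `z'` are `•`, and at the remaining `•`-coordinates of `w`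
the parity condition `pairCond` holds. -/
def IntPair {d : ℕ} (m : ℕ) (w z z' : Cell d) : Prop :=
  (∀ j, w j ≠ Sgn.dot → z j = w j ∧ z' j = w j) ∧
    (bothDot z z').card = m ∧
    ∀ j, w j = Sgn.dot → j ∉ bothDot z z' → pairCond (bothDot z z') j (z j) (z' j)

open Classical in
/-- The finite set of pairs in `Int_m` relative to the cell `w`. -/
noncomputable def intPairs {d : ℕ} (m : ℕ) (w : Cell d) : Finset (Cell d × Cell d) :=
  Finset.univ.filter (fun p => IntPair m w p.1 p.2)

/-- The higher cup product `α ∪_m β` of `ℤ₂`-cochains: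
`(α ∪_m β)(w) = Σ_{(z,z') ∈ Int_m(w)} α(z)·β(z')`. -/
noncomputable def cup {d : ℕ} (m : ℕ) (α β : Cochain d) : Cochain d := fun w =>
  ∑ p ∈ intPairs m w, α p.1 * β p.2

/- ### auxiliary -/

def zA {d : ℕ} (w : Cell d) (S : Finset (Fin d)) : Cell d := fun j =>
  if w j = Sgn.dot then (if j ∈ S then Sgn.pls else Sgn.dot) else w j

def zB {d : ℕ} (w : Cell d) (S : Finset (Fin d)) : Cell d := fun j =>
  if w j = Sgn.dot then (if j ∈ S then Sgn.dot else Sgn.mns) else w j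

lemma mem_dots {d : ℕ} {w : Cell d} {j : Fin d} : j ∈ dots w ↔ w j = Sgn.dot := by
  simp [dots]

lemma dots_zA {d : ℕ} (w : Cell d) (S : Finset (Fin d)) :
    dots (zA w S) = dots w \ S := by
  ext j; by_cases h : w j = Sgn.dot <;> by_cases hS : j ∈ S <;>
    simp [mem_dots, zA, h, hS]

lemma dots_zB {d : ℕ} (w : Cell d) (S : Finset (Fin d)) :
    dots (zB w S) = dots w ∩ S := by
  ext j; by_cases h : w j = Sgn.dot <;> by_cases hS : j ∈ S <;>
    simp [mem_dots, zB, h, hS]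

lemma bothDot_zAB {d : ℕ} (w : Cell d) (S : Finset (Fin d)) :
    bothDot (zA w S) (zB w S) = ∅ := by
  ext j
  by_cases h : w j = Sgn.dot <;> by_cases hS : j ∈ S <;>
    (rw [bothDot, Finset.mem_filter]; simp [zA, zB, h, hS])

lemma intPair_zero_zAB {d : ℕ} (w : Cell d) {S : Finset (Fin d)} (hS : S ⊆ dots w) :
    IntPair 0 w (zA w S) (zB w S) := by
  refine ⟨fun j hj => by simp [zA, zB, hj], by simp [bothDot_zAB], fun j hj _ => ?_⟩
  rw [bothDot_zAB]
  by_cases hS' : j ∈ S <;> simp [pairCond, zA, zB, hj, hS']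

lemma intPair_zero_eq {d : ℕ} {w z z' : Cell d} (h : IntPair 0 w z z') :
    z = zA w (dots w \ dots z) ∧ z' = zB w (dots w \ dots z) ∧ dots w \ dots z ⊆ dots w := by
  obtain ⟨h1, h2, h3⟩ := h
  have hbd : bothDot z z' = ∅ := Finset.card_eq_zero.mp h2
  have key : ∀ j, w j = Sgn.dot →
      (z j = Sgn.pls ∧ z' j = Sgn.dot) ∨ (z j = Sgn.dot ∧ z' j = Sgn.mns) := by
    intro j hj
    have := h3 j hj (by simp [hbd])
    rw [hbd] at this
    simpa [pairCond] using this
  refine ⟨funext fun j => ?_, funext fun j => ?_, Finset.sdiff_subset⟩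
  · by_cases hj : w j = Sgn.dot
    · rcases key j hj with ⟨hz, hz'⟩ | ⟨hz, hz'⟩ <;>
        simp [zA, hj, mem_dots, hz]
    · simp [zA, hj, (h1 j hj).1]
  · by_cases hj : w j = Sgn.dot
    · rcases key j hj with ⟨hz, hz'⟩ | ⟨hz, hz'⟩ <;>
        simp [zB, hj, mem_dots, hz, hz']
    · simp [zB, hj, (h1 j hj).2]

lemma cup_zero_eq {d : ℕ} (α β : Cochain d) (w : Cell d) :
    cup 0 α β w = ∑ S ∈ (dots w).powerset, α (zA w S) * β (zB w S) := by
  classical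
  rw [cup]
  refine Finset.sum_nbij' (fun p => dots w \ dots p.1) (fun S => (zA w S, zB w S))
    ?_ ?_ ?_ ?_ ?_
  · intro p hp
    simp only [intPairs, Finset.mem_filter, Finset.mem_univ, true_and] at hp
    simpa using (intPair_zero_eq hp).2.2
  · intro S hS
    simp only [Finset.mem_powerset] at hS
    simp [intPairs, intPair_zero_zAB w hS]
  · intro p hp
    simp only [intPairs, Finset.mem_filter, Finset.mem_univ, true_and] at hp
    obtain ⟨e1, e2, _⟩ := intPair_zero_eq hp
    exact Prod.ext e1.symm e2.symm
  · intro S hS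
    simp only [Finset.mem_powerset] at hS
    show dots w \ dots (zA w S) = S
    rw [dots_zA, Finset.sdiff_sdiff_eq_self hS]
  · intro p hp
    simp only [intPairs, Finset.mem_filter, Finset.mem_univ, true_and] at hp
    obtain ⟨e1, e2, _⟩ := intPair_zero_eq hp
    rw [← e1, ← e2]

lemma dots_update {d : ℕ} (w : Cell d) (j : Fin d) {s : Sgn} (hs : s ≠ Sgn.dot) :
    dots (Function.update w j s) = (dots w).erase j := by
  ext i
  rcases eq_or_ne i j with rfl | h
  · simp [mem_dots, Function.update_self, hs]
  · simp [mem_dots, Function.update_of_ne h, h]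

lemma zA_update_pls {d : ℕ} {w : Cell d} {j : Fin d} (hj : w j = Sgn.dot)
    (S : Finset (Fin d)) :
    zA (Function.update w j Sgn.pls) S = zA w (insert j S) := by
  funext i
  rcases eq_or_ne i j with rfl | h
  · simp [zA, hj]
  · simp [zA, Function.update_of_ne h, h]

lemma zA_update_mns {d : ℕ} (w : Cell d) (j : Fin d) (S : Finset (Fin d)) :
    zA (Function.update w j Sgn.mns) S = Function.update (zA w S) j Sgn.mns := by
  funext i
  rcases eq_or_ne i j with rfl | h
  · simp [zA]
  · simp [zA, Function.update_of_ne h]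

lemma zB_update_pls {d : ℕ} (w : Cell d) (j : Fin d) (S : Finset (Fin d)) :
    zB (Function.update w j Sgn.pls) S = Function.update (zB w S) j Sgn.pls := by
  funext i
  rcases eq_or_ne i j with rfl | h
  · simp [zB]
  · simp [zB, Function.update_of_ne h]

lemma zB_update_mns {d : ℕ} (w : Cell d) (j : Fin d) (S : Finset (Fin d)) :
    zB (Function.update w j Sgn.mns) S = Function.update (zB w S) j Sgn.mns := by
  funext i
  rcases eq_or_ne i j with rfl | h
  · simp [zB]
  · simp [zB, Function.update_of_ne h]

lemma zB_self_of_not_mem {d : ℕ} {w : Cell d} {j : Fin d} {S : Finset (Fin d)}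
    (hj : w j = Sgn.dot) (hjS : j ∉ S) :
    Function.update (zB w S) j Sgn.mns = zB w S := by
  apply Function.update_eq_self_iff.mpr
  simp [zB, hj, hjS]

lemma zA_insert {d : ℕ} {w : Cell d} {k : Fin d} (hk : w k = Sgn.dot)
    (S : Finset (Fin d)) :
    Function.update (zA w S) k Sgn.pls = zA w (insert k S) := by
  funext i
  rcases eq_or_ne i k with rfl | h
  · simp [zA, hk]
  · simp [zA, Function.update_of_ne h, h]

lemma zB_erase {d : ℕ} {w : Cell d} {k : Fin d} (hk : w k = Sgn.dot)
    (S : Finset (Fin d)) :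
    Function.update (zB w S) k Sgn.mns = zB w (S.erase k) := by
  funext i
  rcases eq_or_ne i k with rfl | h
  · simp [zB, hk]
  · simp [zB, Function.update_of_ne h, h]

lemma zB_insert_update {d : ℕ} (w : Cell d) (k : Fin d) (S : Finset (Fin d)) :
    Function.update (zB w (insert k S)) k Sgn.pls = Function.update (zB w S) k Sgn.pls := by
  funext i
  rcases eq_or_ne i k with rfl | h
  · simp
  · simp [zB, Function.update_of_ne h, h]

/-- Reindex a double sum over `j ∈ D` and subsets of `D.erase j` as a sum over subsets
of `D` and `j ∈ D \ S`. -/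
lemma sum_erase_powerset {γ M : Type*} [DecidableEq γ] [AddCommMonoid M] (D : Finset γ)
    (g : γ → Finset γ → M) :
    ∑ j ∈ D, ∑ S ∈ (D.erase j).powerset, g j S
      = ∑ S ∈ D.powerset, ∑ j ∈ D \ S, g j S := by
  rw [Finset.sum_sigma', Finset.sum_sigma']
  refine Finset.sum_nbij' (fun x => ⟨x.2, x.1⟩) (fun x => ⟨x.2, x.1⟩) ?_ ?_ ?_ ?_ ?_ <;>
    rintro ⟨a, b⟩ h <;>
    simp only [Finset.mem_sigma, Finset.mem_powerset, Finset.mem_sdiff,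
      Finset.subset_erase, Finset.mem_erase] at h ⊢ <;>
    first
      | rfl
      | exact ⟨h.2.1, h.1, h.2.2⟩

/-- Reindex `Σ_{S ⊆ D} Σ_{k ∈ S}` as `Σ_{S ⊆ D} Σ_{k ∈ D \ S}` with `S` replaced by
`insert k S`. -/
lemma sum_insert_reindex {γ M : Type*} [DecidableEq γ] [AddCommMonoid M] (D : Finset γ)
    (f : Finset γ → γ → M) :
    ∑ S ∈ D.powerset, ∑ k ∈ S, f S k
      = ∑ S ∈ D.powerset, ∑ k ∈ D \ S, f (insert k S) k := by
  rw [Finset.sum_sigma', Finset.sum_sigma']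
  refine Finset.sum_nbij' (fun x => ⟨x.1.erase x.2, x.2⟩) (fun x => ⟨insert x.2 x.1, x.2⟩)
    ?_ ?_ ?_ ?_ ?_ <;>
    rintro ⟨S, k⟩ h <;>
    simp only [Finset.mem_sigma, Finset.mem_powerset, Finset.mem_sdiff] at h ⊢
  · exact ⟨(Finset.erase_subset _ _).trans h.1, h.1 h.2, Finset.notMem_erase _ _⟩
  · exact ⟨Finset.insert_subset (h.2.1) h.1, Finset.mem_insert_self _ _⟩
  · simpa using Finset.insert_erase h.2
  · simpa using Finset.erase_insert h.2.2
  · rw [Finset.insert_erase h.2]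

/-- For `d ≥ 1` and `ℤ₂`-cochains `α`, `β` on the `d`-dimensional hypercube,
`δ(α ∪ β) = (δα) ∪ β + α ∪ (δβ)` (where `∪ = ∪₀`), as an equality of `ℤ₂`-cochains. -/
theorem cup_zero_leibniz (d : ℕ) (hd : 1 ≤ d) (α β : Cochain d) :
    delta (cup 0 α β) = cup 0 (delta α) β + cup 0 α (delta β) := by
  classical
  funext w
  -- Left-hand side
  have hL : delta (cup 0 α β) w =
      ∑ S ∈ (dots w).powerset, ∑ j ∈ dots w \ S,
        (α (zA w (insert j S)) * β (Function.update (zB w S) j Sgn.pls)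
          + α (Function.update (zA w S) j Sgn.mns) * β (zB w S)) := by
    rw [← sum_erase_powerset, delta]
    apply Finset.sum_congr rfl
    intro j hj
    have hjd : w j = Sgn.dot := mem_dots.mp hj
    rw [cup_zero_eq, cup_zero_eq, dots_update w j (by simp : Sgn.pls ≠ Sgn.dot),
        dots_update w j (by simp : Sgn.mns ≠ Sgn.dot), ← Finset.sum_add_distrib]
    apply Finset.sum_congr rfl
    intro S hS
    have hjS : j ∉ S := fun h =>
      (Finset.mem_erase.mp (Finset.mem_powerset.mp hS h)).1 rfl
    rw [zA_update_pls hjd, zB_update_pls, zA_update_mns, zB_update_mns,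
        zB_self_of_not_mem hjd hjS]
  -- First right-hand summand
  have hR1 : cup 0 (delta α) β w =
      ∑ S ∈ (dots w).powerset, ∑ k ∈ dots w \ S,
        ((α (zA w (insert k S)) + α (Function.update (zA w S) k Sgn.mns)) * β (zB w S)) := by
    rw [cup_zero_eq]
    apply Finset.sum_congr rfl
    intro S hS
    rw [delta, dots_zA, Finset.sum_mul]
    apply Finset.sum_congr rfl
    intro k hk
    have hkd : w k = Sgn.dot := mem_dots.mp (Finset.mem_sdiff.mp hk).1
    rw [zA_insert hkd]
  -- Second right-hand summand
  have hR2 : cup 0 α (delta β) w =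
      ∑ S ∈ (dots w).powerset, ∑ k ∈ dots w \ S,
        (α (zA w (insert k S)) *
          (β (Function.update (zB w S) k Sgn.pls) + β (zB w S))) := by
    rw [cup_zero_eq]
    have step1 : ∀ S ∈ (dots w).powerset,
        α (zA w S) * delta β (zB w S)
          = ∑ k ∈ S, α (zA w S) *
              (β (Function.update (zB w S) k Sgn.pls) + β (zB w (S.erase k))) := by
      intro S hS
      rw [delta, dots_zB, Finset.inter_eq_right.mpr (Finset.mem_powerset.mp hS),
        Finset.mul_sum]
      apply Finset.sum_congr rfl
      intro k hk
      have hkd : w k = Sgn.dot := mem_dots.mp (Finset.mem_powerset.mp hS hk)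
      rw [zB_erase hkd]
    rw [Finset.sum_congr rfl step1, sum_insert_reindex]
    apply Finset.sum_congr rfl
    intro S hS
    apply Finset.sum_congr rfl
    intro k hk
    have hkd : w k = Sgn.dot := mem_dots.mp (Finset.mem_sdiff.mp hk).1
    have hkS : k ∉ S := (Finset.mem_sdiff.mp hk).2
    rw [zB_insert_update, Finset.erase_insert hkS]
  -- Combine
  rw [Pi.add_apply, hL, hR1, hR2, ← Finset.sum_add_distrib]
  apply Finset.sum_congr rfl
  intro S hS
  rw [← Finset.sum_add_distrib]
  apply Finset.sum_congr rfl
  intro k hk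
  have h2 : (2 : ZMod 2) = 0 := rfl
  linear_combination (-(α (zA w (insert k S)) * β (zB w S))) * h2
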